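/- arXiv:1203.2429 — 2 statements merged into one kernel-verified Lean document; each statement's English description precedes it below -/
import Mathlib

section
/- If S is a pseudo-nilpotent finite semigroup and I is an ideal of S such that both I and the Rees quotient S/I are Mal'cev nilpotent, then S is Mal'cev nilpotent. -/
/-- One multiplication step `a · w · b` where `w` ranges over `S¹`
(`none` playing the role of the adjoined identity). -/
def mulW {S : Type*} [Semigroup S] (a : S) (w : Option S) (b : S) : S :=
  match w with
  | none => a * b
  | some c => a * c * b

/-- The Mal'cev sequences: `(malcev x y w n).1 = λ_n` and `(malcev x y w n).2 = ρ_n`,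
with `λ_0 = x`, `ρ_0 = y`, `λ_{n+1} = λ_n w_{n+1} ρ_n`, `ρ_{n+1} = ρ_n w_{n+1} λ_n`. -/
def malcev {S : Type*} [Semigroup S] (x y : S) (w : ℕ → Option S) : ℕ → S × S
  | 0 => (x, y)
  | n + 1 =>
      let p := malcev x y w n
      (mulW p.1 (w n) p.2, mulW p.2 (w n) p.1)

/-- Mal'cev nilpotency of a (multiplicatively closed) subset `A` of `S`,
computed with parameters from `A¹`. -/
def SetMN {S : Type*} [Semigroup S] (A : Set S) : Prop :=
  ∃ n : ℕ, 0 < n ∧ ∀ x ∈ A, ∀ y ∈ A, ∀ w : ℕ → Option S,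
    (∀ k c, w k = some c → c ∈ A) →
    (malcev x y w n).1 = (malcev x y w n).2

/-- A semigroup is Mal'cev nilpotent. -/
def IsMN (S : Type*) [Semigroup S] : Prop := SetMN (Set.univ : Set S)

/-- Equality in the Rees quotient by (the possibly empty ideal) `I`. -/
def ReesEq {S : Type*} [Semigroup S] (I : Set S) (a b : S) : Prop :=
  a = b ∨ (a ∈ I ∧ b ∈ I)

/-- Mal'cev nilpotency of the Rees quotient `A / I` (computed by lifting to `A`). -/
def SetMNMod {S : Type*} [Semigroup S] (I A : Set S) : Prop :=
  ∃ n : ℕ, 0 < n ∧ ∀ x ∈ A, ∀ y ∈ A, ∀ w : ℕ → Option S,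
    (∀ k c, w k = some c → c ∈ A) →
    ReesEq I (malcev x y w n).1 (malcev x y w n).2

/-- `I` is an ideal of (the mul-closed subset) `T`; the empty set counts as an ideal. -/
def IsIdealIn {S : Type*} [Semigroup S] (T I : Set S) : Prop :=
  I ⊆ T ∧ ∀ a ∈ I, ∀ t ∈ T, t * a ∈ I ∧ a * t ∈ I

/-- Edge of the upper non-nilpotent graph `N_S`: `⟨a,b⟩` is not Mal'cev nilpotent. -/
def NEdge {S : Type*} [Semigroup S] (a b : S) : Prop :=
  a ≠ b ∧ ¬ SetMN (Subsemigroup.closure ({a, b} : Set S) : Set S)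

/-- The generating set of the subsemigroup `⟨x, y, w_1, …, w_m⟩`. -/
def genSet {S : Type*} [Semigroup S] (x y : S) (w : ℕ → Option S) (m : ℕ) : Set S :=
  {x, y} ∪ {c | ∃ k, k < m ∧ w k = some c}

/-- A pseudo-nilpotent semigroup. -/
def IsPN (S : Type*) [Semigroup S] : Prop :=
  ∀ (x y : S) (w : ℕ → Option S) (m : ℕ) (I : Set S),
    IsIdealIn (Subsemigroup.closure (genSet x y w m) : Set S) I →
    (malcev x y w m).1 ∉ I → (malcev x y w m).2 ∉ I →
    (∃ t, t < m ∧ (malcev x y w t).1 ≠ (malcev x y w t).2 ∧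
      malcev x y w t = malcev x y w m) →
    ∀ i ≤ m, ¬ SetMNMod I
      (Subsemigroup.closure ({(malcev x y w i).1, (malcev x y w i).2} : Set S) : Set S)

section Aux

variable {S : Type*} [Semigroup S]

lemma malcev_mem (M : Subsemigroup S) {x y : S} (hx : x ∈ M) (hy : y ∈ M)
    {w : ℕ → Option S} (hw : ∀ k c, w k = some c → c ∈ M) (n : ℕ) :
    (malcev x y w n).1 ∈ M ∧ (malcev x y w n).2 ∈ M := by
  induction n with
  | zero => exact ⟨hx, hy⟩
  | succ n ih =>
    have h1 : ∀ a ∈ M, ∀ b ∈ M, mulW a (w n) b ∈ M := by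
      intro a ha b hb
      unfold mulW
      cases h : w n with
      | none => exact mul_mem ha hb
      | some c => exact mul_mem (mul_mem ha (hw n c h)) hb
    exact ⟨h1 _ ih.1 _ ih.2, h1 _ ih.2 _ ih.1⟩

lemma malcev_eq_of_eq {x y : S} {w : ℕ → Option S} {k : ℕ}
    (h : (malcev x y w k).1 = (malcev x y w k).2) (d : ℕ) :
    (malcev x y w (k + d)).1 = (malcev x y w (k + d)).2 := by
  induction d with
  | zero => exact h
  | succ d ih =>
    have : k + (d + 1) = (k + d) + 1 := by omega
    rw [this]
    show mulW (malcev x y w (k+d)).1 (w (k+d)) (malcev x y w (k+d)).2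
        = mulW (malcev x y w (k+d)).2 (w (k+d)) (malcev x y w (k+d)).1
    rw [ih]

lemma malcev_shift (x y : S) (w : ℕ → Option S) (t : ℕ) (k : ℕ) :
    malcev (malcev x y w t).1 (malcev x y w t).2 (fun j => w (t + j)) k
      = malcev x y w (t + k) := by
  induction k with
  | zero => rfl
  | succ k ih =>
    have : t + (k + 1) = (t + k) + 1 := by omega
    rw [this]
    show (mulW _ (w (t+k)) _, mulW _ (w (t+k)) _) = _
    rw [ih]
    rfl

lemma mulW_mem_ideal {I : Set S} (hI : IsIdealIn Set.univ I) {a b : S}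
    (h : a ∈ I ∨ b ∈ I) (c : Option S) : mulW a c b ∈ I := by
  unfold mulW
  cases c with
  | none =>
    rcases h with h | h
    · exact (hI.2 a h b trivial).2
    · exact (hI.2 b h a trivial).1
  | some d =>
    rcases h with h | h
    · exact (hI.2 (a * d) (hI.2 a h d trivial).2 b trivial).2
    · exact (hI.2 b h (a * d) trivial).1

lemma malcev_ideal_absorb {I : Set S} (hI : IsIdealIn Set.univ I)
    {x y : S} {w : ℕ → Option S} {k : ℕ}
    (h : (malcev x y w k).1 ∈ I ∨ (malcev x y w k).2 ∈ I) (d : ℕ) :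
    (malcev x y w (k + 1 + d)).1 ∈ I ∧ (malcev x y w (k + 1 + d)).2 ∈ I := by
  induction d with
  | zero =>
    exact ⟨mulW_mem_ideal hI h (w k), mulW_mem_ideal hI h.symm (w k)⟩
  | succ d ih =>
    have : k + 1 + (d + 1) = (k + 1 + d) + 1 := by omega
    rw [this]
    exact ⟨mulW_mem_ideal hI (Or.inl ih.1) _, mulW_mem_ideal hI (Or.inl ih.2) _⟩

end Aux

/-- If `S` is pseudo-nilpotent and finite, `I` is an ideal of `S`, and both `I`
and the Rees quotient `S/I` are Mal'cev nilpotent, then `S` is Mal'cev nilpotent. -/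
theorem stmt1 {S : Type*} [Semigroup S] [Finite S] (hPN : IsPN S) (I : Set S)
    (hI : IsIdealIn Set.univ I) (hInil : SetMN I) (hQnil : SetMNMod I Set.univ) :
    IsMN S := by
  by_cases hSne : Nonempty S
  case neg => exact ⟨1, one_pos, fun x _ => (hSne ⟨x⟩).elim⟩
  by_contra hS
  unfold IsMN SetMN at hS
  push_neg at hS
  have _inst := Fintype.ofFinite S
  set N := Fintype.card (S × S) with hNdef
  have hN : 0 < N := Fintype.card_pos
  obtain ⟨x, -, y, -, w, hw, hneN⟩ := hS N hN
  -- pigeonhole: a repeated pair among indices 0..N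
  obtain ⟨i, j, hij, hfij⟩ := Fintype.exists_ne_map_eq_of_card_lt
    (fun i : Fin (N + 1) => malcev x y w i)
    (by simp only [Fintype.card_fin]; omega)
  set t : ℕ := min i.val j.val with htdef
  set m : ℕ := max i.val j.val with hmdef
  have htm : t < m := by
    rcases lt_or_gt_of_ne (fun h : i.val = j.val => hij (Fin.ext h)) with h | h <;> omega
  have hmN : m ≤ N := by
    have := i.isLt; have := j.isLt; omega
  have heq : malcev x y w t = malcev x y w m := by
    rcases le_total i.val j.val with h | h
    · have h1 : t = i.val := by omega
      have h2 : m = j.val := by omega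
      rw [h1, h2]; exact hfij
    · have h1 : t = j.val := by omega
      have h2 : m = i.val := by omega
      rw [h1, h2]; exact hfij.symm
  -- λ_t ≠ ρ_t
  have hne_t : (malcev x y w t).1 ≠ (malcev x y w t).2 := by
    intro h
    have := malcev_eq_of_eq h (N - t)
    rw [show t + (N - t) = N by omega] at this
    exact hneN this
  by_cases hmI : (malcev x y w m).1 ∈ I ∨ (malcev x y w m).2 ∈ I
  · -- Case 2: the repeating pair lies inside the nilpotent ideal I
    have htI : (malcev x y w t).1 ∈ I ∨ (malcev x y w t).2 ∈ I := by
      rw [heq]; exact hmI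
    have hbothm : (malcev x y w m).1 ∈ I ∧ (malcev x y w m).2 ∈ I := by
      have := malcev_ideal_absorb hI htI (m - t - 1)
      rwa [show t + 1 + (m - t - 1) = m by omega] at this
    have hbotht : (malcev x y w t).1 ∈ I ∧ (malcev x y w t).2 ∈ I := by
      rw [heq]; exact hbothm
    set x' := (malcev x y w t).1
    set y' := (malcev x y w t).2
    set w' : ℕ → Option S := fun j => w (t + j) with hw'def
    have hshift0 : malcev x' y' w' 0 = (x', y') := rfl
    have hshiftp : malcev x' y' w' (m - t) = (x', y') := by
      rw [malcev_shift x y w t (m - t), show t + (m - t) = m by omega, ← heq]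
    have hIdeal : IsIdealIn
        (Subsemigroup.closure (genSet x' y' w' (m - t)) : Set S) (∅ : Set S) :=
      ⟨Set.empty_subset _, fun a ha => absurd ha (Set.notMem_empty a)⟩
    have hnot := hPN x' y' w' (m - t) ∅ hIdeal
      (Set.notMem_empty _) (Set.notMem_empty _)
      ⟨0, by omega, hne_t, by rw [hshift0, hshiftp]⟩ 0 (Nat.zero_le _)
    apply hnot
    -- but ⟨x', y'⟩ ⊆ I is Mal'cev nilpotent
    obtain ⟨nI, hnI, hq⟩ := hInil
    set MI : Subsemigroup S :=
      ⟨I, fun {a b} ha hb => (hI.2 b hb a trivial).1⟩ with hMIdef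
    have hCsub : (Subsemigroup.closure
        ({(malcev x' y' w' 0).1, (malcev x' y' w' 0).2} : Set S) : Set S) ⊆ I := by
      intro a ha
      have : Subsemigroup.closure
          ({(malcev x' y' w' 0).1, (malcev x' y' w' 0).2} : Set S) ≤ MI := by
        apply Subsemigroup.closure_le.2
        intro c hc
        rcases hc with hc | hc
        · rw [hc]; exact hbotht.1
        · rw [Set.mem_singleton_iff.1 hc]; exact hbotht.2
      exact this ha
    exact ⟨nI, hnI, fun a ha b hb w'' hw'' =>
      Or.inl (hq a (hCsub ha) b (hCsub hb) w'' (fun k c h => hCsub (hw'' k c h)))⟩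
  · -- Case 1: neither λ_m nor ρ_m in I; use the ideal I ∩ T
    push_neg at hmI
    set T : Subsemigroup S := Subsemigroup.closure (genSet x y w m) with hTdef
    have hIdeal : IsIdealIn (T : Set S) (I ∩ T) := by
      refine ⟨Set.inter_subset_right, fun a ha s hs => ?_⟩
      exact ⟨⟨(hI.2 a ha.1 s trivial).1, mul_mem hs ha.2⟩,
        ⟨(hI.2 a ha.1 s trivial).2, mul_mem ha.2 hs⟩⟩
    have hnot := hPN x y w m (I ∩ T) hIdeal
      (fun h => hmI.1 h.1) (fun h => hmI.2 h.1)
      ⟨t, htm, hne_t, heq⟩ 0 (Nat.zero_le _)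
    apply hnot
    obtain ⟨nQ, hnQ, hq⟩ := hQnil
    have hsub : Subsemigroup.closure
        ({(malcev x y w 0).1, (malcev x y w 0).2} : Set S) ≤ T := by
      apply Subsemigroup.closure_le.2
      intro c hc
      apply Subsemigroup.subset_closure
      rcases hc with hc | hc
      · exact Or.inl (Or.inl hc)
      · exact Or.inl (Or.inr hc)
    refine ⟨nQ, hnQ, fun a ha b hb w'' hw'' => ?_⟩
    rcases hq a trivial b trivial w'' (fun _ _ _ => trivial) with h | ⟨h1, h2⟩
    · exact Or.inl h
    · have hmem := malcev_mem T (hsub ha) (hsub hb)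
        (fun k c h => hsub (hw'' k c h)) nQ
      exact Or.inr ⟨⟨h1, hmem.1⟩, ⟨h2, hmem.2⟩⟩
end

section
/- A finite group is pseudo-nilpotent (as a semigroup) if and only if it is nilpotent. -/
section AuxPN

open scoped commutatorElement

variable {G : Type*} [Group G]

theorem malcev_succ' (x y : G) (w : ℕ → Option G) (n : ℕ) :
    malcev x y w (n+1) =
      (mulW (malcev x y w n).1 (w n) (malcev x y w n).2,
       mulW (malcev x y w n).2 (w n) (malcev x y w n).1) := rfl

theorem step_div (x y : G) (w : ℕ → Option G) (n : ℕ) :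
    ∃ u : G, (malcev x y w (n+1)).1 * (malcev x y w (n+1)).2⁻¹ =
      ⁅(malcev x y w n).1 * (malcev x y w n).2⁻¹, (malcev x y w n).2 * u⁆ := by
  rcases h : w n with _ | c
  · exact ⟨1, by simp only [malcev_succ', h, mulW, commutatorElement_def]; group⟩
  · exact ⟨c, by simp only [malcev_succ', h, mulW, commutatorElement_def]; group⟩

theorem div_mem_lcs (x y : G) (w : ℕ → Option G) :
    ∀ n, (malcev x y w n).1 * (malcev x y w n).2⁻¹ ∈ Subgroup.lowerCentralSeries ⊤ n := by
  intro n
  induction n with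
  | zero => exact Subgroup.mem_top _
  | succ n ih =>
    obtain ⟨u, hu⟩ := step_div x y w n
    rw [hu, Subgroup.mem_lowerCentralSeries_succ_iff]
    exact Subgroup.subset_closure
      ⟨_, ih, _, Subgroup.mem_top _, (commutatorElement_def _ _).symm⟩

theorem malcev_identity (hG : Group.IsNilpotent G) :
    ∃ n, ∀ (x y : G) (w : ℕ → Option G),
      (malcev x y w n).1 = (malcev x y w n).2 := by
  obtain ⟨n, hn⟩ := nilpotent_iff_lowerCentralSeries.mp hG
  refine ⟨n, fun x y w => ?_⟩
  have := div_mem_lcs x y w n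
  rw [hn, Subgroup.mem_bot, mul_inv_eq_one] at this
  exact this

theorem malcev_eq_prop (x y : G) (w : ℕ → Option G) {k : ℕ}
    (h : (malcev x y w k).1 = (malcev x y w k).2) :
    ∀ j, (malcev x y w (k+j)).1 = (malcev x y w (k+j)).2 := by
  intro j
  induction j with
  | zero => exact h
  | succ j ih => rw [show k + (j+1) = (k+j)+1 by ring, malcev_succ', ih]

theorem malcev_congr {x y : G} {w w' : ℕ → Option G} :
    ∀ {n}, (∀ k < n, w k = w' k) → malcev x y w n = malcev x y w' n := by
  intro n
  induction n with
  | zero => intro _; rfl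
  | succ n ih =>
    intro h
    rw [malcev_succ', malcev_succ', ih (fun k hk => h k (Nat.lt_succ_of_lt hk)),
      h n (Nat.lt_succ_self n)]

/-- In a nilpotent group, the Mal'cev sequence can never cycle while `λ_t ≠ ρ_t`. -/
theorem no_cycle (hG : Group.IsNilpotent G) (x y : G) (w : ℕ → Option G) {t m : ℕ}
    (htm : t < m) (hne : (malcev x y w t).1 ≠ (malcev x y w t).2)
    (heq : malcev x y w t = malcev x y w m) : False := by
  obtain ⟨n, hn⟩ := malcev_identity hG
  set d := m - t with hd
  have hd1 : 0 < d := by omega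
  set w' : ℕ → Option G := fun k => if k < t then w k else w (t + (k - t) % d) with hw'
  have hagree : ∀ k, k < m → w k = w' k := by
    intro k hk
    by_cases h : k < t
    · simp [hw', h]
    · have h2 : (k - t) % d = k - t := Nat.mod_eq_of_lt (by omega)
      simp only [hw', if_neg h, h2]
      congr 1
      omega
  have hA : ∀ k, k ≤ m → malcev x y w' k = malcev x y w k :=
    fun k hk => (malcev_congr (fun j hj => hagree j (lt_of_lt_of_le hj hk))).symm
  have hwper : ∀ j, w' (t + j + d) = w' (t + j) := by
    intro j
    simp only [hw', if_neg (by omega : ¬ t + j + d < t), if_neg (by omega : ¬ t + j < t)]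
    have e1 : t + j + d - t = j + d := by omega
    have e2 : t + j - t = j := by omega
    rw [e1, e2, Nat.add_mod_right]
  have hper : ∀ j, malcev x y w' (t + j + d) = malcev x y w' (t + j) := by
    intro j
    induction j with
    | zero =>
      have e : t + 0 + d = m := by omega
      rw [e, Nat.add_zero, hA m le_rfl, hA t (le_of_lt htm), ← heq]
    | succ j ih =>
      rw [show t + (j+1) + d = (t + j + d) + 1 by omega,
        show t + (j+1) = (t+j)+1 by omega, malcev_succ', malcev_succ', ih, hwper j]
  have hiter : ∀ j, malcev x y w' (t + j * d) = malcev x y w' t := by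
    intro j
    induction j with
    | zero => rw [Nat.zero_mul, Nat.add_zero]
    | succ j ih =>
      rw [show t + (j+1) * d = t + j * d + d by ring, hper (j * d), ih]
  have hnd : n ≤ n * d := Nat.le_mul_of_pos_right n hd1
  have e : n + (t + n * d - n) = t + n * d := by omega
  have hK : (malcev x y w' (t + n * d)).1 = (malcev x y w' (t + n * d)).2 := by
    rw [← e]
    exact malcev_eq_prop x y w' (hn x y w') _
  rw [hiter n, hA t (le_of_lt htm)] at hK
  exact hne hK

/-- Iterated commutators. -/
def iterC (x : G) (h : ℕ → G) : ℕ → G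
  | 0 => x
  | k+1 => ⁅iterC x h k, h k⁆

theorem iterC_shift (x : G) (h : ℕ → G) :
    ∀ k, iterC x h (k+1) = iterC ⁅x, h 0⁆ (fun i => h (i+1)) k := by
  intro k
  induction k with
  | zero => rfl
  | succ k ih => show ⁅iterC x h (k+1), h (k+1)⁆ = _; rw [ih]; rfl

theorem iterC_one_prop (x : G) (h : ℕ → G) {k : ℕ} (hk : iterC x h k = 1) :
    ∀ j, iterC x h (k+j) = 1 := by
  intro j
  induction j with
  | zero => exact hk
  | succ j ih =>
    show ⁅iterC x h (k+j), h (k+j)⁆ = 1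
    rw [ih, commutatorElement_def]
    group

theorem mem_ucs : ∀ (N : ℕ) (x : G), (∀ h : ℕ → G, iterC x h N = 1) →
    x ∈ Subgroup.upperCentralSeries G N := by
  intro N
  induction N with
  | zero =>
    intro x hx
    rw [Subgroup.upperCentralSeries_zero, Subgroup.mem_bot]
    exact hx (fun _ => 1)
  | succ N ih =>
    intro x hx
    rw [Subgroup.mem_upperCentralSeries_succ_iff]
    intro y
    apply ih
    intro h
    have := hx (fun i => match i with | 0 => y | i+1 => h i)
    rw [iterC_shift] at this
    exact this

/-- The driven Mal'cev sequence realizing iterated commutators. -/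
def buildL (x : G) (h : ℕ → G) : ℕ → G × G
  | 0 => (1, x)
  | k+1 =>
      let p := buildL x h k
      (p.1 * ((p.1)⁻¹ * h k) * p.2, p.2 * ((p.1)⁻¹ * h k) * p.1)

def buildW (x : G) (h : ℕ → G) : ℕ → Option G :=
  fun k => some (((buildL x h k).1)⁻¹ * h k)

theorem malcev_build (x : G) (h : ℕ → G) :
    ∀ n, malcev 1 x (buildW x h) n = buildL x h n := by
  intro n
  induction n with
  | zero => rfl
  | succ n ih =>
    rw [malcev_succ', ih, buildW]
    rfl

theorem build_p (x : G) (h : ℕ → G) :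
    ∀ k, (buildL x h k).2 * ((buildL x h k).1)⁻¹ = iterC x h k := by
  intro k
  induction k with
  | zero => show x * (1:G)⁻¹ = x; group
  | succ k ih =>
    show (buildL x h k).2 * (((buildL x h k).1)⁻¹ * h k) * (buildL x h k).1 *
        ((buildL x h k).1 * (((buildL x h k).1)⁻¹ * h k) * (buildL x h k).2)⁻¹ =
      ⁅iterC x h k, h k⁆
    rw [← ih, commutatorElement_def]
    group

theorem closure_comm {s : Set G} (hs : ∀ a ∈ s, ∀ b ∈ s, a * b = b * a) :
    ∀ a ∈ Subsemigroup.closure s, ∀ b ∈ Subsemigroup.closure s, a * b = b * a := by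
  intro a ha b hb
  induction ha, hb using Subsemigroup.closure_induction₂ with
  | mem u v hu hv => exact hs u hu v hv
  | mul_left u v z hu hv hz h1 h2 => rw [mul_assoc, h2, ← mul_assoc, h1, mul_assoc]
  | mul_right u v z hz hu hv h1 h2 => rw [← mul_assoc, h1, mul_assoc, h2, ← mul_assoc]

end AuxPN

/-- A finite group is pseudo-nilpotent (as a semigroup) iff it is nilpotent. -/
theorem stmt3 {G : Type*} [Group G] [Finite G] :
    IsPN G ↔ Group.IsNilpotent G := by
  constructor
  · intro hPN
    by_contra hnil
    haveI := Fintype.ofFinite G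
    set N := Fintype.card (G × G) with hN
    have hforall : ¬ ∀ (x : G) (h : ℕ → G), iterC x h N = 1 := by
      intro H
      exact hnil ⟨⟨N, (Subgroup.eq_top_iff' _).mpr fun g => mem_ucs N g (H g)⟩⟩
    push_neg at hforall
    obtain ⟨x, h, hx⟩ := hforall
    set w : ℕ → Option G := buildW x h with hw
    have key : ∀ t m : ℕ, t < m → m ≤ N → malcev 1 x w t = malcev 1 x w m → False := by
      intro t m htm hmN hf
      have hne_t : (malcev 1 x w t).1 ≠ (malcev 1 x w t).2 := by
        intro hcontra
        have hb := build_p x h t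
        rw [← malcev_build x h t, hcontra] at hb
        have ht1 : iterC x h t = 1 := by rw [← hb, ← hw]; group
        have : iterC x h N = 1 := by
          rw [show N = t + (N - t) by omega]
          exact iterC_one_prop x h ht1 _
        exact hx this
      have happ := hPN 1 x w m ∅
        ⟨Set.empty_subset _, fun a ha => absurd ha (Set.notMem_empty a)⟩
        (Set.notMem_empty _) (Set.notMem_empty _)
        ⟨t, htm, hne_t, by rw [hf]⟩ 0 (Nat.zero_le m)
      apply happ
      have hcomm : ∀ u ∈ Subsemigroup.closure ({(malcev 1 x w 0).1, (malcev 1 x w 0).2} : Set G),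
          ∀ v ∈ Subsemigroup.closure ({(malcev 1 x w 0).1, (malcev 1 x w 0).2} : Set G),
          u * v = v * u := by
        apply closure_comm
        have e1 : (malcev 1 x w 0).1 = 1 := rfl
        rintro u (rfl | rfl) v (rfl | rfl) <;> first | rfl | simp [e1]
      refine ⟨1, Nat.one_pos, fun a ha b hb ww hww => Or.inl ?_⟩
      have ha' := SetLike.mem_coe.mp ha
      have hb' := SetLike.mem_coe.mp hb
      show mulW a (ww 0) b = mulW b (ww 0) a
      rcases hc : ww 0 with _ | c
      · exact hcomm a ha' b hb'
      · have hcmem := SetLike.mem_coe.mp (hww 0 c hc)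
        show a * c * b = b * c * a
        rw [hcomm a ha' c hcmem, mul_assoc, hcomm a ha' b hb', ← mul_assoc,
          hcomm c hcmem b hb', mul_assoc]
    have hcard : Fintype.card (G × G) < Fintype.card (Fin (N + 1)) := by
      simp [hN]
    obtain ⟨a, b, hab, hfab⟩ :=
      Fintype.exists_ne_map_eq_of_card_lt (fun k : Fin (N+1) => malcev 1 x w k) hcard
    have haN : (a : ℕ) ≤ N := by omega
    have hbN : (b : ℕ) ≤ N := by omega
    rcases lt_or_gt_of_ne hab with hlt | hlt
    · exact (key a b hlt hbN hfab).elim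
    · exact (key b a hlt haN hfab.symm).elim
  · intro hG
    intro x y w m I _ _ _ hcyc i _
    obtain ⟨t, htm, hne, heq⟩ := hcyc
    exact (no_cycle hG x y w htm hne heq).elim
end
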